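/- If A is an n×n normal matrix with eigenvalues λ_1,...,λ_n and E is any n×n matrix, then every eigenvalue λ̂ of A+E satisfies |λ̂ - λ_i| ≤ ‖E‖ for some i, where ‖E‖ denotes the spectral norm (largest singular value) of E. -/

import Mathlib

open scoped Matrix


/-- If `A` is an `n × n` normal complex matrix with eigenvalues
`lam 1, ..., lam n` (i.e. `A = U diag(lam) U*` for a unitary `U`) and `E` is any
`n × n` complex matrix, then every eigenvalue `μ` of `A + E` is within spectral-norm
distance `‖E‖` of some `lam i`. -/
theorem stmt_3 (n : ℕ) (A E : Matrix (Fin n) (Fin n) ℂ)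
    (hnormal : A * A.conjTranspose = A.conjTranspose * A)
    (lam : Fin n → ℂ) (U : Matrix.unitaryGroup (Fin n) ℂ)
    (hdiag : A = (U : Matrix (Fin n) (Fin n) ℂ) * Matrix.diagonal lam * (star U : Matrix.unitaryGroup (Fin n) ℂ))
    (μ : ℂ) (v : Fin n → ℂ) (hv : v ≠ 0) (heig : (A + E).mulVec v = μ • v) :
    ∃ i : Fin n, ‖μ - lam i‖ ≤ ‖Matrix.toEuclideanCLM (𝕜 := ℂ) E‖ := by
  classical
  set C : ℝ := ‖Matrix.toEuclideanCLM (𝕜 := ℂ) E‖ with hC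
  by_contra hcon
  push_neg at hcon
  set Um : Matrix (Fin n) (Fin n) ℂ := (U : Matrix (Fin n) (Fin n) ℂ) with hUm
  set Us : Matrix (Fin n) (Fin n) ℂ := star Um with hUs
  have hUsU : Us * Um = 1 := U.2.1
  have hUUs : Um * Us = 1 := U.2.2
  set w : Fin n → ℂ := Us.mulVec v with hw
  set g : Fin n → ℂ := Us.mulVec (E.mulVec v) with hg
  -- norm preservation under Us
  have hpres : ∀ x : Fin n → ℂ,
      ∑ i, Complex.normSq (Us.mulVec x i) = ∑ i, Complex.normSq (x i) := by
    intro x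
    have h1 : star (Us.mulVec x) ⬝ᵥ (Us.mulVec x) = star x ⬝ᵥ x := by
      rw [Matrix.star_mulVec, Matrix.dotProduct_mulVec, Matrix.vecMul_vecMul]
      have : Usᴴ = Um := by
        simp [hUs, Matrix.star_eq_conjTranspose, Matrix.conjTranspose_conjTranspose]
      rw [this, hUUs, Matrix.vecMul_one]
    have h2 : ∀ y : Fin n → ℂ, star y ⬝ᵥ y = ((∑ i, Complex.normSq (y i) : ℝ) : ℂ) := by
      intro y
      simp only [dotProduct, Pi.star_apply, Complex.star_def]
      push_cast
      refine Finset.sum_congr rfl fun i _ => ?_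
      rw [Complex.normSq_eq_conj_mul_self]
    have := h1
    rw [h2, h2] at this
    exact_mod_cast this
  -- eigen equation after conjugation
  have hkey : ∀ i, g i = (μ - lam i) * w i := by
    have h0 : Us.mulVec ((A + E).mulVec v) = Us.mulVec (μ • v) := by rw [heig]
    have h1 : (Matrix.diagonal lam).mulVec w + g = μ • w := by
      have hA : Us * A = Matrix.diagonal lam * Us := by
        rw [hdiag]
        show Us * (Um * Matrix.diagonal lam * Us) = _
        rw [← mul_assoc, ← mul_assoc, hUsU, one_mul]
      calc (Matrix.diagonal lam).mulVec w + g
          = (Matrix.diagonal lam * Us).mulVec v + (Us * E).mulVec v := by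
            rw [hw, hg, Matrix.mulVec_mulVec, Matrix.mulVec_mulVec]
        _ = (Us * (A + E)).mulVec v := by
            rw [mul_add, Matrix.add_mulVec, hA]
        _ = Us.mulVec ((A + E).mulVec v) := by rw [Matrix.mulVec_mulVec]
        _ = Us.mulVec (μ • v) := h0
        _ = μ • w := by rw [Matrix.mulVec_smul, hw]
    intro i
    have := congrFun h1 i
    simp only [Pi.add_apply, Matrix.mulVec_diagonal, Pi.smul_apply, smul_eq_mul] at this
    linear_combination this
  -- w ≠ 0
  have hwne : ∃ j, w j ≠ 0 := by
    by_contra h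
    push_neg at h
    apply hv
    have : Um.mulVec w = v := by
      rw [hw, Matrix.mulVec_mulVec, hUUs, Matrix.one_mulVec]
    rw [← this]
    have hw0 : w = 0 := funext h
    rw [hw0, Matrix.mulVec_zero]
  obtain ⟨j, hj⟩ := hwne
  have hCnn : 0 ≤ C := norm_nonneg _
  -- operator norm bound
  have hE : ∑ i, Complex.normSq (E.mulVec v i) ≤ C ^ 2 * ∑ i, Complex.normSq (v i) := by
    set v' : EuclideanSpace ℂ (Fin n) := (WithLp.equiv 2 _).symm v with hv'
    have happ : Matrix.toEuclideanCLM (𝕜 := ℂ) E v' = (WithLp.equiv 2 _).symm (E.mulVec v) := by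
      rw [hv', WithLp.equiv_symm_apply, Matrix.toEuclideanCLM_toLp]
    have hle : ‖Matrix.toEuclideanCLM (𝕜 := ℂ) E v'‖ ≤ C * ‖v'‖ :=
      (Matrix.toEuclideanCLM (𝕜 := ℂ) E).le_opNorm v'
    have hsq : ‖Matrix.toEuclideanCLM (𝕜 := ℂ) E v'‖ ^ 2 ≤ (C * ‖v'‖) ^ 2 := by
      apply pow_le_pow_left₀ (norm_nonneg _) hle
    have hn1 : ‖Matrix.toEuclideanCLM (𝕜 := ℂ) E v'‖ ^ 2 = ∑ i, Complex.normSq (E.mulVec v i) := by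
      rw [happ, EuclideanSpace.norm_eq, Real.sq_sqrt (by positivity)]
      refine Finset.sum_congr rfl fun i _ => ?_
      rw [← Complex.sq_norm]
      norm_num
    have hn2 : ‖v'‖ ^ 2 = ∑ i, Complex.normSq (v i) := by
      rw [hv', EuclideanSpace.norm_eq, Real.sq_sqrt (by positivity)]
      refine Finset.sum_congr rfl fun i _ => ?_
      rw [← Complex.sq_norm]
      norm_num
    calc ∑ i, Complex.normSq (E.mulVec v i) = ‖Matrix.toEuclideanCLM (𝕜 := ℂ) E v'‖ ^ 2 := hn1.symm
      _ ≤ (C * ‖v'‖) ^ 2 := hsq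
      _ = C ^ 2 * ∑ i, Complex.normSq (v i) := by rw [mul_pow, hn2]
  -- the contradiction
  have hlt : C ^ 2 * ∑ i, Complex.normSq (v i) < ∑ i, Complex.normSq (g i) := by
    have hwv : ∑ i, Complex.normSq (w i) = ∑ i, Complex.normSq (v i) := hpres v
    rw [← hwv, Finset.mul_sum]
    apply Finset.sum_lt_sum
    · intro i _
      rw [hkey i, Complex.normSq_mul]
      apply mul_le_mul_of_nonneg_right _ (Complex.normSq_nonneg _)
      rw [← Complex.sq_norm]
      exact pow_le_pow_left₀ hCnn (hcon i).le 2
    · refine ⟨j, Finset.mem_univ j, ?_⟩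
      rw [hkey j, Complex.normSq_mul]
      apply mul_lt_mul_of_pos_right _ (Complex.normSq_pos.mpr hj)
      rw [← Complex.sq_norm]
      exact pow_lt_pow_left₀ (hcon j) hCnn (by norm_num)
  have hge : ∑ i, Complex.normSq (g i) = ∑ i, Complex.normSq (E.mulVec v i) := hpres _
  rw [hge] at hlt
  exact absurd hE (not_le.mpr hlt)
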